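/- Let L be a transfer operator for (A, α) and n ≥ 0. For x ∈ A, consider the semi-inner products ⟨x, y⟩_n = L^n(x*y). Then for all x ∈ A one has ⟨α(x), α(x)⟩_{n+1} = L^n(x*·L(1)·x) ≤ ‖L(1)‖ · ⟨x, x⟩_n, so the map x ↦ α(x) from (A, ⟨·,·⟩_n) to (A, ⟨·,·⟩_{n+1}) is bounded with norm at most ‖L(1)‖^{1/2}. -/

import Mathlib

/-- With the semi-inner products `⟨x, y⟩ₙ = Lⁿ (x* y)`, one has
`⟨α x, α x⟩ₙ₊₁ = Lⁿ (x* L(1) x) ≤ ‖L 1‖ • ⟨x, x⟩ₙ`, so that `x ↦ α x` is bounded with norm at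
most `‖L 1‖^{1/2}`. -/
theorem transfer_gamma_bounded
    {A : Type*} [CStarAlgebra A] [PartialOrder A] [StarOrderedRing A]
    (α : A →⋆ₐ[ℂ] A) (L : A →L[ℂ] A)
    (hpos : ∀ a : A, 0 ≤ a → 0 ≤ L a)
    (htr : ∀ a b : A, L (α a * b) = a * L b)
    (n : ℕ) :
    ∀ x : A,
      (⇑L)^[n + 1] (star (α x) * α x) = (⇑L)^[n] (star x * L 1 * x) ∧
      (⇑L)^[n + 1] (star (α x) * α x) ≤ ‖L 1‖ • (⇑L)^[n] (star x * x) := by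
  intro x
  -- L is star-preserving (as a positive map)
  have hstar : ∀ a : A, L (star a) = star (L a) := by
    intro a
    -- positive maps preserve star; prove by decomposing into selfadjoint parts
    -- We instead derive it directly: for selfadjoint b, L b is selfadjoint,
    -- since b = p - q with p, q ≥ 0.
    have key : ∀ b : A, IsSelfAdjoint b → IsSelfAdjoint (L b) := by
      intro b hb
      rw [← CFC.posPart_sub_negPart b hb, map_sub]
      exact ((hpos _ (CFC.posPart_nonneg b)).isSelfAdjoint.sub
        (hpos _ (CFC.negPart_nonneg b)).isSelfAdjoint)
    have h1 : IsSelfAdjoint (a + star a) := by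
      rw [IsSelfAdjoint, star_add, star_star, add_comm]
    have h2 : IsSelfAdjoint (Complex.I • (a - star a)) := by
      rw [IsSelfAdjoint, star_smul, star_sub, star_star, Complex.star_def, Complex.conj_I,
        neg_smul, smul_sub, smul_sub, neg_sub]
    have e1 := key _ h1
    have e2 := key _ h2
    rw [map_add] at e1
    rw [map_smul, map_sub] at e2
    rw [IsSelfAdjoint, star_add] at e1
    rw [IsSelfAdjoint, star_smul, Complex.star_def, Complex.conj_I, star_sub, neg_smul] at e2
    -- from e1 : star (L a) + star (L (star a)) = L a + L (star a)
    -- from e2 : -(I • (star (L a) - star (L (star a)))) = I • (L a - L (star a))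
    have e2' : star (L (star a)) - star (L a) = L a - L (star a) := by
      have h := congrArg (fun z => Complex.I • z) e2
      simp only [smul_neg, smul_smul, Complex.I_mul_I, neg_smul, one_smul, neg_neg] at h
      rw [← neg_sub (star (L a)), h, neg_neg]
    have esum : star (L (star a)) = L a := by
      have h : star (L (star a)) + star (L (star a)) = L a + L a := by
        calc star (L (star a)) + star (L (star a))
            = (star (L a) + star (L (star a))) + (star (L (star a)) - star (L a)) := by abel
          _ = (L a + L (star a)) + (L a - L (star a)) := by rw [e1, e2']
          _ = L a + L a := by abel
      have h2 : (2 : ℂ) • star (L (star a)) = (2 : ℂ) • L a := by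
        rw [two_smul, two_smul]; exact h
      exact smul_right_injective A (two_ne_zero) h2
    calc L (star a) = star (star (L (star a))) := by rw [star_star]
    _ = star (L a) := by rw [esum]
  -- the "right-handed" transfer identity
  have htr' : ∀ a b : A, L (b * α a) = L b * a := by
    intro a b
    have h := htr (star a) (star b)
    have hs : α (star a) * star b = star (b * α a) := by rw [star_mul, map_star]
    rw [hs, hstar, hstar] at h
    have h2 := congrArg star h
    simp only [star_star, star_mul] at h2
    exact h2
  have key : L (star (α x) * α x) = star x * L 1 * x := by
    have h1 : star (α x) * α x = α (star x) * α x := by rw [map_star]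
    rw [h1, htr]
    have : α x = 1 * α x := by rw [one_mul]
    rw [this, htr', mul_assoc]
  -- monotonicity of L and its iterates
  have hmono : Monotone ⇑L := by
    intro a b hab
    have := hpos (b - a) (sub_nonneg.mpr hab)
    rw [map_sub] at this
    exact sub_nonneg.mp this
  have hsmul : ∀ (r : ℝ) (a : A), (⇑L)^[n] (r • a) = r • (⇑L)^[n] a := by
    intro r
    induction n with
    | zero => intro a; simp
    | succ k ih =>
      intro a
      rw [Function.iterate_succ_apply, L.map_smul_of_tower, ih, Function.iterate_succ_apply]
  have hmonoIter : Monotone ((⇑L)^[n]) := Monotone.iterate hmono n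
  have hL1 : IsSelfAdjoint (L 1) := (hpos 1 zero_le_one).isSelfAdjoint
  have hineq : star x * L 1 * x ≤ ‖L 1‖ • (star x * x) :=
    CStarAlgebra.star_left_conjugate_le_norm_smul hL1
  constructor
  · rw [Function.iterate_succ_apply, key]
  · rw [Function.iterate_succ_apply, key, ← hsmul]
    exact hmonoIter hineq
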